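/- For every n ≥ 1, the 8-tuples of statistics (mnd, mna, des, asc, ldr, rar, lmin, rmin) and (mna, mnd, asc, des, rar, ldr, rmin, lmin) are equidistributed over S_n(312): for every 8-tuple of nonnegative integers (a_1,…,a_8), the number of π ∈ S_n(312) with (mnd, mna, des, asc, ldr, rar, lmin, rmin)(π) = (a_1,…,a_8) equals the number of π ∈ S_n(312) with (mna, mnd, asc, des, rar, ldr, rmin, lmin)(π) = (a_1,…,a_8). -/

import Mathlib

namespace PermWord

/-- The word of a permutation `π` of `[n]`, with the boundary convention
`π₀ = π_{n+1} = 0`: `wordOf n π i = π_i` for `1 ≤ i ≤ n` and `0` otherwise. -/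
def wordOf (n : ℕ) (π : Equiv.Perm (Fin n)) (i : ℕ) : ℕ :=
  if h : 1 ≤ i ∧ i ≤ n then ((π ⟨i - 1, by omega⟩ : Fin n) : ℕ) + 1 else 0

/-- `π` is 312-avoiding: there are no indices `i < j < k` in `[n]` with
`π_i > π_k > π_j`. -/
def Avoids312 (n : ℕ) (π : Equiv.Perm (Fin n)) : Prop :=
  ∀ i ∈ Finset.Icc 1 n, ∀ j ∈ Finset.Icc 1 n, ∀ k ∈ Finset.Icc 1 n,
    i < j → j < k → ¬(wordOf n π k < wordOf n π i ∧ wordOf n π j < wordOf n π k)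

instance (n : ℕ) (π : Equiv.Perm (Fin n)) : Decidable (Avoids312 n π) := by
  unfold Avoids312; infer_instance

/-- The descent set of `π`. -/
def DES (n : ℕ) (π : Equiv.Perm (Fin n)) : Finset ℕ :=
  (Finset.Icc 1 (n - 1)).filter (fun i => wordOf n π (i + 1) < wordOf n π i)

/-- The ascent set of `π`. -/
def ASC (n : ℕ) (π : Equiv.Perm (Fin n)) : Finset ℕ :=
  (Finset.Icc 1 (n - 1)).filter (fun i => wordOf n π i < wordOf n π (i + 1))

/-- `π_i` is a left-to-right minimum of `π`. -/
def IsLRMin (n : ℕ) (π : Equiv.Perm (Fin n)) (i : ℕ) : Prop :=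
  ∀ j ∈ Finset.Icc 1 (i - 1), wordOf n π i < wordOf n π j

instance (n : ℕ) (π : Equiv.Perm (Fin n)) (i : ℕ) : Decidable (IsLRMin n π i) := by
  unfold IsLRMin; infer_instance

/-- `π_i` is a right-to-left minimum of `π`. -/
def IsRLMin (n : ℕ) (π : Equiv.Perm (Fin n)) (i : ℕ) : Prop :=
  ∀ j ∈ Finset.Icc (i + 1) n, wordOf n π i < wordOf n π j

instance (n : ℕ) (π : Equiv.Perm (Fin n)) (i : ℕ) : Decidable (IsRLMin n π i) := by
  unfold IsRLMin; infer_instance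

/-- The number of left-to-right minima of `π`. -/
def lmin (n : ℕ) (π : Equiv.Perm (Fin n)) : ℕ :=
  ((Finset.Icc 1 n).filter (IsLRMin n π)).card

/-- The number of right-to-left minima of `π`. -/
def rmin (n : ℕ) (π : Equiv.Perm (Fin n)) : ℕ :=
  ((Finset.Icc 1 n).filter (IsRLMin n π)).card

/-- The number of descents of `π`. -/
def des (n : ℕ) (π : Equiv.Perm (Fin n)) : ℕ := (DES n π).card

/-- The number of ascents of `π`. -/
def asc (n : ℕ) (π : Equiv.Perm (Fin n)) : ℕ := (ASC n π).card

/-- `S` contains no two consecutive integers. -/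
def NonOverlapping (S : Finset ℕ) : Prop := ∀ i ∈ S, i + 1 ∉ S

instance (S : Finset ℕ) : Decidable (NonOverlapping S) := by
  unfold NonOverlapping; infer_instance

/-- The maximum number of non-overlapping descents of `π`: the maximum size of a
subset of the descent set containing no two consecutive integers. -/
def mnd (n : ℕ) (π : Equiv.Perm (Fin n)) : ℕ :=
  ((DES n π).powerset.filter NonOverlapping).sup Finset.card

/-- The maximum number of non-overlapping ascents of `π`. -/
def mna (n : ℕ) (π : Equiv.Perm (Fin n)) : ℕ :=
  ((ASC n π).powerset.filter NonOverlapping).sup Finset.card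

/-- The first `j` entries of `π` are decreasing. -/
def DecreasingPrefix (n : ℕ) (π : Equiv.Perm (Fin n)) (j : ℕ) : Prop :=
  ∀ i ∈ Finset.Icc 1 (j - 1), wordOf n π (i + 1) < wordOf n π i

instance (n : ℕ) (π : Equiv.Perm (Fin n)) (j : ℕ) : Decidable (DecreasingPrefix n π j) := by
  unfold DecreasingPrefix; infer_instance

/-- The last `j` entries of `π` are increasing. -/
def IncreasingSuffix (n : ℕ) (π : Equiv.Perm (Fin n)) (j : ℕ) : Prop :=
  ∀ i ∈ Finset.Icc (n - j + 1) (n - 1), wordOf n π i < wordOf n π (i + 1)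

instance (n : ℕ) (π : Equiv.Perm (Fin n)) (j : ℕ) : Decidable (IncreasingSuffix n π j) := by
  unfold IncreasingSuffix; infer_instance

/-- The length `ldr(π)` of the maximal initial decreasing run of `π`: the largest `j ∈ [n]`
such that `π₁ > π₂ > ⋯ > π_j`. -/
def ldr (n : ℕ) (π : Equiv.Perm (Fin n)) : ℕ :=
  ((Finset.Icc 1 n).filter (DecreasingPrefix n π)).sup id

/-- The length `rar(π)` of the maximal final increasing run of `π`: the largest `j ∈ [n]`
such that `π_{n-j+1} < ⋯ < π_n`. -/
def rar (n : ℕ) (π : Equiv.Perm (Fin n)) : ℕ :=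
  ((Finset.Icc 1 n).filter (IncreasingSuffix n π)).sup id

end PermWord


namespace KZ
open Finset

/-- value at 1-based position, 0 out of range -/
def nth (w : List ℕ) (i : ℕ) : ℕ :=
  if h : 1 ≤ i ∧ i ≤ w.length then w[i-1]'(by omega) else 0

def desSet (w : List ℕ) : Finset ℕ :=
  (Finset.Icc 1 (w.length - 1)).filter (fun i => nth w (i+1) < nth w i)

def ascSet (w : List ℕ) : Finset ℕ :=
  (Finset.Icc 1 (w.length - 1)).filter (fun i => nth w i < nth w (i+1))

def M (S : Finset ℕ) : ℕ :=
  (S.powerset.filter PermWord.NonOverlapping).sup Finset.card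

def mndl (w : List ℕ) : ℕ := M (desSet w)
def mnal (w : List ℕ) : ℕ := M (ascSet w)
def desl (w : List ℕ) : ℕ := (desSet w).card
def ascl (w : List ℕ) : ℕ := (ascSet w).card

def IsLRMinL (w : List ℕ) (i : ℕ) : Prop :=
  ∀ j ∈ Finset.Icc 1 (i-1), nth w i < nth w j
def IsRLMinL (w : List ℕ) (i : ℕ) : Prop :=
  ∀ j ∈ Finset.Icc (i+1) w.length, nth w i < nth w j
instance (w : List ℕ) (i : ℕ) : Decidable (IsLRMinL w i) := by
  unfold IsLRMinL; infer_instance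
instance (w : List ℕ) (i : ℕ) : Decidable (IsRLMinL w i) := by
  unfold IsRLMinL; infer_instance
def lminSet (w : List ℕ) : Finset ℕ := (Finset.Icc 1 w.length).filter (IsLRMinL w)
def rminSet (w : List ℕ) : Finset ℕ := (Finset.Icc 1 w.length).filter (IsRLMinL w)
def lminl (w : List ℕ) : ℕ := (lminSet w).card
def rminl (w : List ℕ) : ℕ := (rminSet w).card

def decP (w : List ℕ) (j : ℕ) : Prop :=
  ∀ i ∈ Finset.Icc 1 (j-1), nth w (i+1) < nth w i
def incS (w : List ℕ) (j : ℕ) : Prop :=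
  ∀ i ∈ Finset.Icc (w.length - j + 1) (w.length - 1), nth w i < nth w (i+1)

instance (w : List ℕ) (j : ℕ) : Decidable (decP w j) := by unfold decP; infer_instance
instance (w : List ℕ) (j : ℕ) : Decidable (incS w j) := by unfold incS; infer_instance

def ldrl (w : List ℕ) : ℕ := ((Finset.Icc 1 w.length).filter (decP w)).sup id
def rarl (w : List ℕ) : ℕ := ((Finset.Icc 1 w.length).filter (incS w)).sup id

def avl (w : List ℕ) : Prop :=
  ∀ i ∈ Finset.Icc 1 w.length, ∀ j ∈ Finset.Icc 1 w.length, ∀ k ∈ Finset.Icc 1 w.length,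
    i < j → j < k → ¬(nth w k < nth w i ∧ nth w j < nth w k)

def m9l (w : List ℕ) : ℕ := if w = [] then 0 else M (insert w.length (desSet w))
def m10l (w : List ℕ) : ℕ := if w = [] then 0 else M (insert 1 ((ascSet w).image (· + 1)))

/-! ### M lemmas -/

lemma nonOverlapping_subset {W W' : Finset ℕ} (h : W ⊆ W')
    (h' : PermWord.NonOverlapping W') : PermWord.NonOverlapping W :=
  fun i hi hi1 => h' i (h hi) (h hi1)

lemma card_le_M {W S : Finset ℕ} (h : W ⊆ S) (h' : PermWord.NonOverlapping W) :
    W.card ≤ M S :=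
  Finset.le_sup (by simp [Finset.mem_filter, Finset.mem_powerset, h, h'])

lemma exists_M (S : Finset ℕ) :
    ∃ W ⊆ S, PermWord.NonOverlapping W ∧ W.card = M S := by
  have hne : (S.powerset.filter PermWord.NonOverlapping).Nonempty :=
    ⟨∅, by simp [PermWord.NonOverlapping]⟩
  obtain ⟨W, hW, hW2⟩ := Finset.exists_mem_eq_sup _ hne Finset.card
  simp only [Finset.mem_filter, Finset.mem_powerset] at hW
  exact ⟨W, hW.1, hW.2, hW2.symm⟩

lemma M_mono {S T : Finset ℕ} (h : S ⊆ T) : M S ≤ M T := by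
  obtain ⟨W, h1, h2, h3⟩ := exists_M S
  rw [← h3]; exact card_le_M (h1.trans h) h2

@[simp] lemma M_empty : M (∅ : Finset ℕ) = 0 := by
  obtain ⟨W, h1, h2, h3⟩ := exists_M (∅ : Finset ℕ)
  rw [← h3]; simp [Finset.subset_empty.mp h1]

@[simp] lemma M_singleton (a : ℕ) : M ({a} : Finset ℕ) = 1 := by
  apply le_antisymm
  · obtain ⟨W, h1, h2, h3⟩ := exists_M ({a} : Finset ℕ)
    rw [← h3]
    calc W.card ≤ ({a} : Finset ℕ).card := Finset.card_le_card h1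
    _ = 1 := Finset.card_singleton a
  · exact le_trans (by simp) (card_le_M (le_refl {a})
      (fun i hi hi1 => by simp_all))

lemma M_union_sep {S T : Finset ℕ} (h : ∀ i ∈ S, ∀ j ∈ T, i + 1 < j) :
    M (S ∪ T) = M S + M T := by
  have hdisj : Disjoint S T := by
    rw [Finset.disjoint_left]; intro a ha ha'; have := h a ha a ha'; omega
  apply le_antisymm
  · obtain ⟨W, h1, h2, h3⟩ := exists_M (S ∪ T)
    rw [← h3]
    have : W = (W ∩ S) ∪ (W ∩ T) := by
      rw [← Finset.inter_union_distrib_left, Finset.inter_eq_left.mpr h1]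
    rw [this]
    calc ((W ∩ S) ∪ (W ∩ T)).card ≤ (W ∩ S).card + (W ∩ T).card :=
      Finset.card_union_le _ _
    _ ≤ M S + M T := Nat.add_le_add
        (card_le_M Finset.inter_subset_right
          (nonOverlapping_subset Finset.inter_subset_left h2))
        (card_le_M Finset.inter_subset_right
          (nonOverlapping_subset Finset.inter_subset_left h2))
  · obtain ⟨W1, a1, b1, c1⟩ := exists_M S
    obtain ⟨W2, a2, b2, c2⟩ := exists_M T
    rw [← c1, ← c2]
    have hd : Disjoint W1 W2 := hdisj.mono a1 a2
    rw [← Finset.card_union_of_disjoint hd]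
    apply card_le_M (Finset.union_subset_union a1 a2)
    intro i hi hi1
    simp only [Finset.mem_union] at hi hi1
    rcases hi with hi | hi <;> rcases hi1 with hi1 | hi1
    · exact b1 i hi hi1
    · have := h i (a1 hi) (i+1) (a2 hi1); omega
    · have := h (i+1) (a1 hi1) i (a2 hi); omega
    · exact b2 i hi hi1

lemma M_image_add (S : Finset ℕ) (c : ℕ) : M (S.image (· + c)) = M S := by
  apply le_antisymm
  · obtain ⟨W, h1, h2, h3⟩ := exists_M (S.image (· + c))
    rw [← h3]
    have hW : ∀ x ∈ W, c ≤ x := by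
      intro x hx; have := h1 hx; simp only [Finset.mem_image] at this; omega
    have : W.card = (W.image (· - c)).card := by
      rw [Finset.card_image_of_injOn]
      intro x hx y hy hxy
      dsimp only at hxy
      have := hW x hx; have := hW y hy; omega
    rw [this]
    apply card_le_M
    · intro x hx
      simp only [Finset.mem_image] at hx
      obtain ⟨y, hy, rfl⟩ := hx
      have := h1 hy
      simp only [Finset.mem_image] at this ⊢
      obtain ⟨z, hz, hz2⟩ := this
      have : y - c = z := by omega
      rwa [this]
    · intro i hi hi1
      simp only [Finset.mem_image] at hi hi1
      obtain ⟨x, hx, hxe⟩ := hi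
      obtain ⟨y, hy, hye⟩ := hi1
      have hcx := hW x hx; have hcy := hW y hy
      have : y = x + 1 := by omega
      exact h2 x hx (this ▸ hy)
  · obtain ⟨W, h1, h2, h3⟩ := exists_M S
    rw [← h3]
    have : W.card = (W.image (· + c)).card := by
      rw [Finset.card_image_of_injOn]; intro x _ y _ h; dsimp only at h; omega
    rw [this]
    apply card_le_M (Finset.image_subset_image h1)
    intro i hi hi1
    simp only [Finset.mem_image] at hi hi1
    obtain ⟨x, hx, hxe⟩ := hi
    obtain ⟨y, hy, hye⟩ := hi1
    have : y = x + 1 := by omega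
    exact h2 x hx (this ▸ hy)

lemma M_insert_top {S : Finset ℕ} {b : ℕ} (h : ∀ i ∈ S, i + 1 < b) :
    M (insert b S) = M S + 1 := by
  have : insert b S = S ∪ {b} := by
    ext x; simp [Finset.mem_insert, Finset.mem_union, or_comm]
  rw [this, M_union_sep (by simpa using h), M_singleton]

lemma M_insert_bot {S : Finset ℕ} {b : ℕ} (h : ∀ j ∈ S, b + 1 < j) :
    M (insert b S) = M S + 1 := by
  rw [Finset.insert_eq, M_union_sep (by simpa using h), M_singleton]
  omega

lemma M_union_adj_pair (S : Finset ℕ) (a : ℕ) :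
    M (S ∪ {a, a+1}) ≤ M S + 1 := by
  obtain ⟨W, h1, h2, h3⟩ := exists_M (S ∪ {a, a+1})
  rw [← h3]
  have hsub : W \ {a, a+1} ⊆ S := by
    intro x hx
    simp only [Finset.mem_sdiff, Finset.mem_insert, Finset.mem_singleton] at hx
    have := h1 hx.1
    simp only [Finset.mem_union, Finset.mem_insert, Finset.mem_singleton] at this
    tauto
  have hcard : (W ∩ {a, a+1}).card ≤ 1 := by
    by_cases ha : a ∈ W
    · have hsub2 : W ∩ {a, a+1} ⊆ {a} := by
        intro x hx
        simp only [Finset.mem_inter, Finset.mem_insert, Finset.mem_singleton] at hx ⊢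
        rcases hx.2 with rfl | rfl
        · rfl
        · exact absurd hx.1 (h2 a ha)
      simpa using Finset.card_le_card hsub2
    · have hsub2 : W ∩ {a, a+1} ⊆ {a+1} := by
        intro x hx
        simp only [Finset.mem_inter, Finset.mem_insert, Finset.mem_singleton] at hx ⊢
        rcases hx.2 with rfl | rfl
        · exact absurd hx.1 ha
        · rfl
      simpa using Finset.card_le_card hsub2
  calc W.card ≤ (W \ {a, a+1}).card + (W ∩ {a, a+1}).card := by
        apply le_of_eq
        rw [Finset.card_sdiff_add_card_inter]
  _ ≤ M S + 1 := Nat.add_le_add (card_le_M hsub (nonOverlapping_subset Finset.sdiff_subset h2)) hcard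


/-! ### concatenation -/

lemma nth_eq (w : List ℕ) (i : ℕ) :
    nth w i = if i = 0 then 0 else (w[i-1]?).getD 0 := by
  unfold nth
  split
  · next h =>
    rw [if_neg (by omega), List.getElem?_eq_getElem (by omega)]
    rfl
  · next h =>
    by_cases h0 : i = 0
    · rw [if_pos h0]
    · rw [if_neg h0, List.getElem?_eq_none (by omega)]
      rfl

@[simp] lemma nth_zero (w : List ℕ) : nth w 0 = 0 := by simp [nth]

section Concat

variable (u v : List ℕ) (m : ℕ)

lemma len_concat : (u ++ m :: v).length = u.length + v.length + 1 := by
  simp [List.length_append]; omega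

lemma nth_left {i : ℕ} (h2 : i ≤ u.length) :
    nth (u ++ m :: v) i = nth u i := by
  by_cases h0 : i = 0
  · subst h0; simp
  · rw [nth_eq, nth_eq, if_neg h0, if_neg h0,
      List.getElem?_append_left (by omega)]

lemma nth_mid : nth (u ++ m :: v) (u.length + 1) = m := by
  rw [nth_eq, if_neg (by omega)]
  have e : u.length + 1 - 1 = u.length := by omega
  rw [e, List.getElem?_append_right (le_refl u.length)]
  simp

lemma nth_right {i : ℕ} (h1 : u.length + 2 ≤ i) :
    nth (u ++ m :: v) i = nth v (i - (u.length + 1)) := by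
  rw [nth_eq, nth_eq, if_neg (by omega), if_neg (by omega),
    List.getElem?_append_right (by omega : u.length ≤ i - 1)]
  have e : i - 1 - u.length = (i - u.length - 2) + 1 := by omega
  rw [e, List.getElem?_cons_succ]
  have e2 : i - (u.length + 1) - 1 = i - u.length - 2 := by omega
  rw [e2]

lemma nth_mem (w : List ℕ) {i : ℕ} (h1 : 1 ≤ i) (h2 : i ≤ w.length) :
    nth w i ∈ w := by
  unfold nth
  rw [dif_pos ⟨h1, h2⟩]
  exact List.getElem_mem _

lemma desSet_subset (w : List ℕ) : desSet w ⊆ Finset.Icc 1 (w.length - 1) :=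
  Finset.filter_subset _ _

lemma ascSet_subset (w : List ℕ) : ascSet w ⊆ Finset.Icc 1 (w.length - 1) :=
  Finset.filter_subset _ _

variable (hu : ∀ x ∈ u, m < x) (hv : ∀ x ∈ v, m < x)

include hu hv in
lemma desSet_concat (hp : u ≠ []) :
    desSet (u ++ m :: v) =
      insert u.length (desSet u) ∪ (desSet v).image (· + (u.length + 1)) := by
  have hp1 : 1 ≤ u.length := List.length_pos_iff.mpr hp
  ext i
  simp only [desSet, Finset.mem_filter, Finset.mem_Icc, Finset.mem_union, Finset.mem_insert,
    Finset.mem_image, len_concat]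
  constructor
  · rintro ⟨⟨hi1, hi2⟩, hlt⟩
    rcases lt_trichotomy i u.length with hc | hc | hc
    · left; right
      rw [nth_left u v m (by omega), nth_left u v m (by omega)] at hlt
      exact ⟨⟨hi1, by omega⟩, hlt⟩
    · left; left; omega
    · right
      by_cases hq : i = u.length + 1
      · exfalso
        subst hq
        have hqq : 1 ≤ v.length := by omega
        rw [nth_mid u v m, nth_right u v m (by omega),
          show u.length + 1 + 1 - (u.length + 1) = 1 by omega] at hlt
        exact absurd hlt (not_lt.mpr (le_of_lt (hv _ (nth_mem v (le_refl 1) hqq))))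
      · refine ⟨i - (u.length + 1), ⟨⟨by omega, by omega⟩, ?_⟩, by omega⟩
        rw [nth_right u v m (by omega), nth_right u v m (by omega),
          show i + 1 - (u.length + 1) = i - (u.length + 1) + 1 by omega] at hlt
        exact hlt
  · rintro ((rfl | ⟨⟨hj1, hj2⟩, hd⟩) | ⟨j, ⟨⟨hj1, hj2⟩, hd⟩, rfl⟩)
    · refine ⟨⟨hp1, by omega⟩, ?_⟩
      rw [nth_mid u v m, nth_left u v m (le_refl _)]
      exact hu _ (nth_mem u hp1 (le_refl _))
    · refine ⟨⟨hj1, by omega⟩, ?_⟩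
      rw [nth_left u v m (by omega), nth_left u v m (by omega)]
      exact hd
    · refine ⟨⟨by omega, by omega⟩, ?_⟩
      rw [nth_right u v m (by omega), nth_right u v m (by omega),
        show j + (u.length + 1) + 1 - (u.length + 1) = j + 1 by omega,
        show j + (u.length + 1) - (u.length + 1) = j by omega]
      exact hd

include hv in
lemma desSet_concat_nilu :
    desSet (m :: v) = (desSet v).image (· + 1) := by
  have h := fun (i : ℕ) (h1 : 2 ≤ i) => nth_right [] v m (i := i) (by simpa using h1)
  simp only [List.nil_append, List.length_nil] at h
  have hmid := nth_mid [] v m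
  simp only [List.nil_append, List.length_nil] at hmid
  ext i
  simp only [desSet, Finset.mem_filter, Finset.mem_Icc, Finset.mem_image, List.length_cons]
  constructor
  · rintro ⟨⟨hi1, hi2⟩, hlt⟩
    by_cases hq : i = 1
    · exfalso
      subst hq
      have hqq : 1 ≤ v.length := by omega
      rw [show (1:ℕ) = 0 + 1 by omega, hmid, h 2 (by omega),
        show 2 - (0 + 1) = 1 by omega] at hlt
      exact absurd hlt (not_lt.mpr (le_of_lt (hv _ (nth_mem v (le_refl 1) hqq))))
    · refine ⟨i - 1, ⟨⟨by omega, by omega⟩, ?_⟩, by omega⟩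
      rw [h i (by omega), h (i+1) (by omega),
        show i + 1 - (0 + 1) = i - (0+1) + 1 by omega,
        show i - (0 + 1) = i - 1 by omega] at hlt
      exact hlt
  · rintro ⟨j, ⟨⟨hj1, hj2⟩, hd⟩, rfl⟩
    refine ⟨⟨by omega, by omega⟩, ?_⟩
    rw [h (j+1) (by omega), h (j+1+1) (by omega),
      show j + 1 + 1 - (0 + 1) = j + 1 by omega,
      show j + 1 - (0 + 1) = j by omega]
    exact hd

include hu hv in
lemma ascSet_concat (hq : v ≠ []) :
    ascSet (u ++ m :: v) =
      ascSet u ∪ insert (u.length + 1) ((ascSet v).image (· + (u.length + 1))) := by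
  have hq1 : 1 ≤ v.length := List.length_pos_iff.mpr hq
  ext i
  simp only [ascSet, Finset.mem_filter, Finset.mem_Icc, Finset.mem_union, Finset.mem_insert,
    Finset.mem_image, len_concat]
  constructor
  · rintro ⟨⟨hi1, hi2⟩, hlt⟩
    rcases lt_trichotomy i u.length with hc | hc | hc
    · left
      rw [nth_left u v m (by omega), nth_left u v m (by omega)] at hlt
      exact ⟨⟨hi1, by omega⟩, hlt⟩
    · exfalso
      subst hc
      have hp1 : 1 ≤ u.length := hi1
      rw [nth_left u v m (le_refl _), nth_mid u v m] at hlt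
      exact absurd hlt (not_lt.mpr (le_of_lt (hu _ (nth_mem u hp1 (le_refl _)))))
    · right
      by_cases hc2 : i = u.length + 1
      · left; exact hc2
      · right
        refine ⟨i - (u.length + 1), ⟨⟨by omega, by omega⟩, ?_⟩, by omega⟩
        rw [nth_right u v m (by omega), nth_right u v m (by omega),
          show i + 1 - (u.length + 1) = i - (u.length + 1) + 1 by omega] at hlt
        exact hlt
  · rintro (⟨⟨hj1, hj2⟩, hd⟩ | rfl | ⟨j, ⟨⟨hj1, hj2⟩, hd⟩, rfl⟩)
    · refine ⟨⟨hj1, by omega⟩, ?_⟩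
      rw [nth_left u v m (by omega), nth_left u v m (by omega)]
      exact hd
    · refine ⟨⟨by omega, by omega⟩, ?_⟩
      rw [nth_mid u v m, nth_right u v m (by omega),
        show u.length + 1 + 1 - (u.length + 1) = 1 by omega]
      exact hv _ (nth_mem v (le_refl 1) hq1)
    · refine ⟨⟨by omega, by omega⟩, ?_⟩
      rw [nth_right u v m (by omega), nth_right u v m (by omega),
        show j + (u.length + 1) + 1 - (u.length + 1) = j + 1 by omega,
        show j + (u.length + 1) - (u.length + 1) = j by omega]
      exact hd

include hu in
lemma ascSet_concat_nilv :
    ascSet (u ++ [m]) = ascSet u := by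
  have heq : u ++ [m] = u ++ m :: ([] : List ℕ) := rfl
  ext i
  rw [heq]
  simp only [ascSet, Finset.mem_filter, Finset.mem_Icc, len_concat, List.length_nil]
  constructor
  · rintro ⟨⟨hi1, hi2⟩, hlt⟩
    rcases lt_trichotomy i u.length with hc | hc | hc
    · rw [nth_left u ([] : List ℕ) m (by omega),
        nth_left u ([] : List ℕ) m (by omega)] at hlt
      exact ⟨⟨hi1, by omega⟩, hlt⟩
    · exfalso
      subst hc
      have hp1 : 1 ≤ u.length := hi1
      rw [nth_left u ([] : List ℕ) m (le_refl _), nth_mid u ([] : List ℕ) m] at hlt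
      exact absurd hlt (not_lt.mpr (le_of_lt (hu _ (nth_mem u hp1 (le_refl _)))))
    · omega
  · rintro ⟨⟨hj1, hj2⟩, hd⟩
    refine ⟨⟨hj1, by omega⟩, ?_⟩
    rw [nth_left u ([] : List ℕ) m (by omega),
      nth_left u ([] : List ℕ) m (by omega)]
    exact hd

end Concat

/-! ### statistic recursions -/

section StatRec

variable (u v : List ℕ) (m : ℕ)
variable (hu : ∀ x ∈ u, m < x) (hv : ∀ x ∈ v, m < x)

lemma mem_desSet_bound {w : List ℕ} {i : ℕ} (h : i ∈ desSet w) :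
    1 ≤ i ∧ i ≤ w.length - 1 := by
  have := desSet_subset w h; simpa using this

lemma mem_ascSet_bound {w : List ℕ} {i : ℕ} (h : i ∈ ascSet w) :
    1 ≤ i ∧ i ≤ w.length - 1 := by
  have := ascSet_subset w h; simpa using this

include hu hv in
lemma mnd_concat :
    mndl (u ++ m :: v) = (if u = [] then 0 else m9l u) + mndl v := by
  by_cases hp : u = []
  · subst hp
    rw [if_pos rfl]
    unfold mndl
    rw [show ([] : List ℕ) ++ m :: v = m :: v from rfl, desSet_concat_nilu v m hv,
      M_image_add]
    omega
  · rw [if_neg hp]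
    unfold mndl
    rw [desSet_concat u v m hu hv hp, M_union_sep, M_image_add, m9l, if_neg hp]
    intro i hi j hj
    simp only [Finset.mem_insert] at hi
    simp only [Finset.mem_image] at hj
    obtain ⟨j', hj', rfl⟩ := hj
    have hj'1 := (mem_desSet_bound hj').1
    rcases hi with rfl | hi
    · omega
    · have := (mem_desSet_bound hi).2
      have hp1 : 1 ≤ u.length := List.length_pos_iff.mpr hp
      omega

include hu hv in
lemma mna_concat :
    mnal (u ++ m :: v) = mnal u + (if v = [] then 0 else m10l v) := by
  by_cases hq : v = []
  · subst hq
    rw [if_pos rfl]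
    unfold mnal
    rw [show u ++ m :: ([] : List ℕ) = u ++ [m] from rfl, ascSet_concat_nilv u m hu]
    omega
  · rw [if_neg hq]
    unfold mnal
    rw [ascSet_concat u v m hu hv hq, M_union_sep]
    · congr 1
      rw [m10l, if_neg hq]
      have himg : insert (u.length + 1) ((ascSet v).image (· + (u.length + 1))) =
          (insert 1 ((ascSet v).image (· + 1))).image (· + u.length) := by
        ext x
        simp only [Finset.mem_insert, Finset.mem_image]
        constructor
        · rintro (rfl | ⟨j, hj, rfl⟩)
          · exact ⟨1, Or.inl rfl, by omega⟩
          · exact ⟨j + 1, Or.inr ⟨j, hj, rfl⟩, by omega⟩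
        · rintro ⟨y, (rfl | ⟨j, hj, rfl⟩), rfl⟩
          · left; omega
          · right; exact ⟨j, hj, by omega⟩
      rw [himg, M_image_add]
    · intro i hi j hj
      have hi2 := (mem_ascSet_bound hi).2
      have hi1 := (mem_ascSet_bound hi).1
      have hp1 : 1 ≤ u.length := by omega
      simp only [Finset.mem_insert, Finset.mem_image] at hj
      rcases hj with rfl | ⟨j', hj', rfl⟩
      · omega
      · have := (mem_ascSet_bound hj').1
        omega

include hu hv in
lemma des_concat :
    desl (u ++ m :: v) = desl u + desl v + (if u = [] then 0 else 1) := by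
  by_cases hp : u = []
  · subst hp
    rw [if_pos rfl]
    unfold desl
    rw [show ([] : List ℕ) ++ m :: v = m :: v from rfl, desSet_concat_nilu v m hv,
      Finset.card_image_of_injective _ (fun a b h => by omega)]
    simp [desSet]
  · rw [if_neg hp]
    have hp1 : 1 ≤ u.length := List.length_pos_iff.mpr hp
    unfold desl
    rw [desSet_concat u v m hu hv hp, Finset.card_union_of_disjoint, Finset.card_insert_of_notMem,
      Finset.card_image_of_injective _ (fun a b h => by omega)]
    · omega
    · intro hmem
      have := (mem_desSet_bound hmem).2
      omega
    · rw [Finset.disjoint_left]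
      intro a ha ha'
      simp only [Finset.mem_insert] at ha
      simp only [Finset.mem_image] at ha'
      obtain ⟨j, hj, rfl⟩ := ha'
      have := (mem_desSet_bound hj).1
      rcases ha with h | h
      · omega
      · have := (mem_desSet_bound h).2
        omega

include hu hv in
lemma asc_concat :
    ascl (u ++ m :: v) = ascl u + ascl v + (if v = [] then 0 else 1) := by
  by_cases hq : v = []
  · subst hq
    rw [if_pos rfl]
    unfold ascl
    rw [show u ++ m :: ([] : List ℕ) = u ++ [m] from rfl, ascSet_concat_nilv u m hu]
    simp [ascSet]
  · rw [if_neg hq]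
    unfold ascl
    rw [ascSet_concat u v m hu hv hq, Finset.card_union_of_disjoint,
      Finset.card_insert_of_notMem, Finset.card_image_of_injective _
        (fun a b h => by omega)]
    · omega
    · intro hmem
      simp only [Finset.mem_image] at hmem
      obtain ⟨j, hj, hje⟩ := hmem
      have := (mem_ascSet_bound hj).1
      omega
    · rw [Finset.disjoint_left]
      intro a ha ha'
      have ha2 := (mem_ascSet_bound ha).2
      have ha1 := (mem_ascSet_bound ha).1
      have hp0 : 1 ≤ u.length := by omega
      simp only [Finset.mem_insert, Finset.mem_image] at ha'
      rcases ha' with h | ⟨j, hj, rfl⟩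
      · omega
      · have := (mem_ascSet_bound hj).1
        omega

include hu hv in
lemma m9_concat :
    m9l (u ++ m :: v) =
      if v = [] then mndl u + 1
      else (if u = [] then 0 else m9l u) + m9l v := by
  have hw : u ++ m :: v ≠ [] := by simp
  rw [m9l, if_neg hw]
  by_cases hq : v = []
  · subst hq
    rw [if_pos rfl]
    by_cases hp : u = []
    · subst hp
      simp only [List.nil_append, List.length_cons, List.length_nil]
      rw [show desSet [m] = ∅ from by simp [desSet]]
      simp [mndl, desSet]
    · have hp1 : 1 ≤ u.length := List.length_pos_iff.mpr hp
      rw [desSet_concat u [] m hu (by simp) hp]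
      rw [show (desSet ([] : List ℕ)).image (· + (u.length + 1)) = ∅ from by simp [desSet]]
      rw [Finset.union_empty, len_concat]
      simp only [List.length_nil]
      have hset : insert (u.length + 0 + 1) (insert u.length (desSet u)) =
          desSet u ∪ {u.length, u.length + 1} := by
        ext x
        simp only [Finset.mem_insert, Finset.mem_union, Finset.mem_singleton]
        constructor
        · rintro (rfl | rfl | h)
          · right; right; omega
          · right; left; rfl
          · left; exact h
        · rintro (h | rfl | rfl)
          · right; right; exact h
          · right; left; rfl
          · left; omega
      rw [hset]
      apply le_antisymm
      · exact M_union_adj_pair _ _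
      · have h1 : M (insert (u.length + 1) (desSet u)) = M (desSet u) + 1 := by
          apply M_insert_top
          intro i hi
          have := (mem_desSet_bound hi).2
          omega
        calc mndl u + 1 = M (insert (u.length + 1) (desSet u)) := h1.symm
        _ ≤ _ := M_mono (by
            intro x hx
            simp only [Finset.mem_insert, Finset.mem_union, Finset.mem_singleton] at hx ⊢
            tauto)
  · rw [if_neg hq]
    have hq1 : 1 ≤ v.length := List.length_pos_iff.mpr hq
    by_cases hp : u = []
    · subst hp
      rw [if_pos rfl]
      simp only [List.nil_append, List.length_cons]
      rw [desSet_concat_nilu v m hv]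
      have hset : insert (v.length + 1) ((desSet v).image (· + 1)) =
          (insert v.length (desSet v)).image (· + 1) := by
        ext x
        simp only [Finset.mem_insert, Finset.mem_image]
        constructor
        · rintro (rfl | ⟨j, hj, rfl⟩)
          · exact ⟨v.length, Or.inl rfl, rfl⟩
          · exact ⟨j, Or.inr hj, rfl⟩
        · rintro ⟨y, (rfl | hj), rfl⟩
          · left; rfl
          · right; exact ⟨y, hj, rfl⟩
      rw [hset, M_image_add, m9l, if_neg hq]
      omega
    · rw [if_neg hp]
      have hp1 : 1 ≤ u.length := List.length_pos_iff.mpr hp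
      rw [desSet_concat u v m hu hv hp, len_concat]
      have hset : insert (u.length + v.length + 1)
            (insert u.length (desSet u) ∪ (desSet v).image (· + (u.length + 1))) =
          insert u.length (desSet u) ∪
            (insert v.length (desSet v)).image (· + (u.length + 1)) := by
        ext x
        simp only [Finset.mem_insert, Finset.mem_union, Finset.mem_image]
        constructor
        · rintro (rfl | (h | h) | ⟨j, hj, rfl⟩)
          · right; exact ⟨v.length, Or.inl rfl, by omega⟩
          · left; left; exact h
          · left; right; exact h
          · right; exact ⟨j, Or.inr hj, rfl⟩
        · rintro ((h | h) | ⟨y, (rfl | hj), rfl⟩)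
          · right; left; left; exact h
          · right; left; right; exact h
          · left; omega
          · right; right; exact ⟨y, hj, rfl⟩
      rw [hset, M_union_sep, M_image_add, m9l, if_neg hp, m9l, if_neg hq]
      intro i hi j hj
      simp only [Finset.mem_insert, Finset.mem_image] at hi hj
      obtain ⟨j', hj', rfl⟩ := hj
      have hj'1 : 1 ≤ j' := by
        rcases hj' with rfl | h
        · omega
        · exact (mem_desSet_bound h).1
      rcases hi with rfl | hi
      · omega
      · have := (mem_desSet_bound hi).2
        omega

include hu hv in
lemma m10_concat :
    m10l (u ++ m :: v) =
      if u = [] then mnal v + 1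
      else m10l u + (if v = [] then 0 else m10l v) := by
  have hw : u ++ m :: v ≠ [] := by simp
  rw [m10l, if_neg hw]
  by_cases hp : u = []
  · subst hp
    rw [if_pos rfl]
    by_cases hq : v = []
    · subst hq
      simp only [List.nil_append]
      rw [show ascSet [m] = ∅ from by simp [ascSet]]
      simp [mnal, ascSet]
    · simp only [List.nil_append]
      rw [show (m :: v) = ([] : List ℕ) ++ m :: v from rfl,
        ascSet_concat [] v m (by simp) hv hq]
      simp only [List.length_nil]
      rw [show ascSet ([] : List ℕ) = ∅ from by simp [ascSet], Finset.empty_union]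
      -- goal : M (insert 1 ((insert (0+1) ((ascSet v).image (·+(0+1)))).image (·+1))) = mnal v + 1
      have hset : insert 1 ((insert (0 + 1) ((ascSet v).image (· + (0 + 1)))).image (· + 1)) =
          ((ascSet v).image (· + 2)) ∪ {1, 2} := by
        ext x
        simp only [Finset.mem_insert, Finset.mem_image, Finset.mem_union, Finset.mem_singleton]
        constructor
        · rintro (rfl | ⟨y, (rfl | ⟨j, hj, rfl⟩), rfl⟩)
          · right; left; rfl
          · right; right; rfl
          · left; exact ⟨j, hj, by omega⟩
        · rintro (⟨j, hj, rfl⟩ | rfl | rfl)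
          · right; exact ⟨j + 1, Or.inr ⟨j, hj, rfl⟩, by omega⟩
          · left; rfl
          · right; exact ⟨1, Or.inl rfl, rfl⟩
      rw [hset]
      apply le_antisymm
      · have := M_union_adj_pair ((ascSet v).image (· + 2)) 1
        rw [M_image_add] at this
        exact this
      · have h1 : M (insert 1 ((ascSet v).image (· + 2))) = M (ascSet v) + 1 := by
          rw [M_insert_bot, M_image_add]
          intro i hi
          simp only [Finset.mem_image] at hi
          obtain ⟨j, hj, rfl⟩ := hi
          have := (mem_ascSet_bound hj).1
          omega
        have h2 : M (insert 1 ((ascSet v).image (· + 2))) ≤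
            M ((ascSet v).image (· + 2) ∪ {1, 2}) := by
          apply M_mono
          intro x hx
          simp only [Finset.mem_insert, Finset.mem_union, Finset.mem_image,
            Finset.mem_singleton] at hx ⊢
          rcases hx with rfl | h
          · right; left; rfl
          · left; exact h
        unfold mnal
        omega
  · rw [if_neg hp]
    have hp1 : 1 ≤ u.length := List.length_pos_iff.mpr hp
    by_cases hq : v = []
    · subst hq
      rw [if_pos rfl, show u ++ m :: ([] : List ℕ) = u ++ [m] from rfl,
        ascSet_concat_nilv u m hu, m10l, if_neg hp]
      omega
    · rw [if_neg hq]
      have hq1 : 1 ≤ v.length := List.length_pos_iff.mpr hq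
      rw [ascSet_concat u v m hu hv hq]
      have hset : insert 1 ((ascSet u ∪
            insert (u.length + 1) ((ascSet v).image (· + (u.length + 1)))).image (· + 1)) =
          (insert 1 ((ascSet u).image (· + 1))) ∪
            (insert 1 ((ascSet v).image (· + 1))).image (· + (u.length + 1)) := by
        ext x
        simp only [Finset.mem_insert, Finset.mem_union, Finset.mem_image]
        constructor
        · rintro (rfl | ⟨y, (hy | (rfl | ⟨j, hj, rfl⟩)), rfl⟩)
          · left; left; rfl
          · left; right; exact ⟨y, hy, rfl⟩
          · right; exact ⟨1, Or.inl rfl, by omega⟩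
          · right; exact ⟨j + 1, Or.inr ⟨j, hj, rfl⟩, by omega⟩
        · rintro ((rfl | ⟨y, hy, rfl⟩) | ⟨y, (rfl | ⟨j, hj, rfl⟩), rfl⟩)
          · left; rfl
          · right; exact ⟨y, Or.inl hy, rfl⟩
          · right; exact ⟨u.length + 1, Or.inr (Or.inl rfl), by omega⟩
          · right; exact ⟨j + (u.length + 1), Or.inr (Or.inr ⟨j, hj, rfl⟩), by omega⟩
      rw [hset, M_union_sep, M_image_add, m10l, if_neg hp, m10l, if_neg hq]
      intro i hi j hj
      simp only [Finset.mem_insert, Finset.mem_image] at hi hj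
      have hi' : i ≤ u.length := by
        rcases hi with rfl | ⟨y, hy, rfl⟩
        · omega
        · have := (mem_ascSet_bound hy).2
          omega
      obtain ⟨y, hy, rfl⟩ := hj
      have hy' : 1 ≤ y := by
        rcases hy with rfl | ⟨j', hj', rfl⟩
        · omega
        · have := (mem_ascSet_bound hj').1
          omega
      omega


include hu hv in
lemma lminSet_concat :
    lminSet (u ++ m :: v) = insert (u.length + 1) (lminSet u) := by
  ext i
  simp only [lminSet, Finset.mem_filter, Finset.mem_Icc, Finset.mem_insert, len_concat]
  constructor
  · rintro ⟨⟨hi1, hi2⟩, hmin⟩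
    rcases lt_trichotomy i (u.length + 1) with hc | hc | hc
    · right
      refine ⟨⟨hi1, by omega⟩, fun j hj => ?_⟩
      rw [Finset.mem_Icc] at hj
      have := hmin j (by rw [Finset.mem_Icc]; omega)
      rwa [nth_left u v m (by omega), nth_left u v m (by omega)] at this
    · left; exact hc
    · exfalso
      have h1 := hmin (u.length + 1) (by rw [Finset.mem_Icc]; omega)
      rw [nth_mid u v m, nth_right u v m (by omega)] at h1
      have hmem : nth v (i - (u.length + 1)) ∈ v := nth_mem v (by omega) (by omega)
      exact absurd h1 (not_lt.mpr (le_of_lt (hv _ hmem)))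
  · rintro (rfl | ⟨⟨hj1, hj2⟩, hmin⟩)
    · refine ⟨⟨by omega, by omega⟩, fun j hj => ?_⟩
      rw [Finset.mem_Icc] at hj
      rw [nth_mid u v m, nth_left u v m (by omega)]
      exact hu _ (nth_mem u (by omega) (by omega))
    · refine ⟨⟨hj1, by omega⟩, fun j hj => ?_⟩
      rw [Finset.mem_Icc] at hj
      rw [nth_left u v m (by omega), nth_left u v m (by omega)]
      exact hmin j (by rw [Finset.mem_Icc]; omega)

include hu hv in
lemma lmin_concat : lminl (u ++ m :: v) = lminl u + 1 := by
  unfold lminl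
  rw [lminSet_concat u v m hu hv, Finset.card_insert_of_notMem]
  intro hmem
  have := Finset.mem_Icc.mp (Finset.filter_subset _ _ hmem)
  omega

include hu hv in
lemma rminSet_concat :
    rminSet (u ++ m :: v) =
      insert (u.length + 1) ((rminSet v).image (· + (u.length + 1))) := by
  ext i
  simp only [rminSet, Finset.mem_filter, Finset.mem_Icc, Finset.mem_insert,
    Finset.mem_image, len_concat]
  constructor
  · rintro ⟨⟨hi1, hi2⟩, hmin⟩
    rcases lt_trichotomy i (u.length + 1) with hc | hc | hc
    · exfalso
      have h1 := hmin (u.length + 1) (by rw [Finset.mem_Icc, len_concat]; omega)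
      rw [nth_mid u v m, nth_left u v m (by omega)] at h1
      have hmem : nth u i ∈ u := nth_mem u (by omega) (by omega)
      exact absurd h1 (not_lt.mpr (le_of_lt (hu _ hmem)))
    · left; exact hc
    · right
      refine ⟨i - (u.length + 1), ⟨⟨by omega, by omega⟩, fun j hj => ?_⟩, by omega⟩
      rw [Finset.mem_Icc] at hj
      have h1 := hmin (u.length + 1 + j) (by rw [Finset.mem_Icc, len_concat]; omega)
      rwa [nth_right u v m (by omega), nth_right u v m (by omega),
        show u.length + 1 + j - (u.length + 1) = j by omega] at h1
  · rintro (rfl | ⟨j, ⟨⟨hj1, hj2⟩, hmin⟩, rfl⟩)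
    · refine ⟨⟨by omega, by omega⟩, fun j hj => ?_⟩
      rw [Finset.mem_Icc, len_concat] at hj
      rw [nth_mid u v m, nth_right u v m (by omega)]
      exact hv _ (nth_mem v (by omega) (by omega))
    · refine ⟨⟨by omega, by omega⟩, fun j' hj' => ?_⟩
      rw [Finset.mem_Icc, len_concat] at hj'
      rw [nth_right u v m (by omega), nth_right u v m (by omega),
        show j + (u.length + 1) - (u.length + 1) = j by omega]
      exact hmin (j' - (u.length + 1)) (by rw [Finset.mem_Icc]; omega)

include hu hv in
lemma rmin_concat : rminl (u ++ m :: v) = rminl v + 1 := by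
  unfold rminl
  rw [rminSet_concat u v m hu hv, Finset.card_insert_of_notMem,
    Finset.card_image_of_injective _ (fun a b h => by omega)]
  intro hmem
  simp only [Finset.mem_image] at hmem
  obtain ⟨j, hj, hje⟩ := hmem
  have := Finset.mem_Icc.mp (Finset.filter_subset _ _ hj)
  omega

/-! #### ldr / rar -/

lemma decP_small (w : List ℕ) {j : ℕ} (hj : j ≤ 1) : decP w j := by
  intro i hi
  rw [Finset.mem_Icc] at hi
  omega

lemma incS_small (w : List ℕ) {j : ℕ} (hj : j ≤ 1) : incS w j := by
  intro i hi
  rw [Finset.mem_Icc] at hi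
  omega

lemma ldr_le (w : List ℕ) : ldrl w ≤ w.length := by
  apply Finset.sup_le
  intro b hb
  exact (Finset.mem_Icc.mp (Finset.filter_subset _ _ hb)).2

lemma rar_le (w : List ℕ) : rarl w ≤ w.length := by
  apply Finset.sup_le
  intro b hb
  exact (Finset.mem_Icc.mp (Finset.filter_subset _ _ hb)).2

lemma ldr_full (w : List ℕ) : ldrl w = w.length ↔ decP w w.length := by
  constructor
  · intro h
    by_cases hp : w.length = 0
    · exact decP_small w (by omega)
    · have hne : ((Finset.Icc 1 w.length).filter (decP w)).Nonempty :=
        ⟨1, by rw [Finset.mem_filter, Finset.mem_Icc]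
               exact ⟨⟨le_rfl, by omega⟩, decP_small w le_rfl⟩⟩
      obtain ⟨b, hb, hbe⟩ := Finset.exists_mem_eq_sup _ hne id
      rw [Finset.mem_filter] at hb
      have hbv : b = w.length := by
        have h2 : ldrl w = b := hbe
        omega
      exact hbv ▸ hb.2
  · intro h
    by_cases hp : w.length = 0
    · rw [hp]
      unfold ldrl
      rw [hp]
      simp
    · apply le_antisymm (ldr_le w)
      apply Finset.le_sup (f := id)
      rw [Finset.mem_filter, Finset.mem_Icc]
      exact ⟨⟨by omega, le_rfl⟩, h⟩

lemma rar_full (w : List ℕ) : rarl w = w.length ↔ incS w w.length := by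
  constructor
  · intro h
    by_cases hp : w.length = 0
    · exact incS_small w (by omega)
    · have hne : ((Finset.Icc 1 w.length).filter (incS w)).Nonempty :=
        ⟨1, by rw [Finset.mem_filter, Finset.mem_Icc]
               exact ⟨⟨le_rfl, by omega⟩, incS_small w le_rfl⟩⟩
      obtain ⟨b, hb, hbe⟩ := Finset.exists_mem_eq_sup _ hne id
      rw [Finset.mem_filter] at hb
      have hbv : b = w.length := by
        have h2 : rarl w = b := hbe
        omega
      exact hbv ▸ hb.2
  · intro h
    by_cases hp : w.length = 0
    · rw [hp]
      unfold rarl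
      rw [hp]
      simp
    · apply le_antisymm (rar_le w)
      apply Finset.le_sup (f := id)
      rw [Finset.mem_filter, Finset.mem_Icc]
      exact ⟨⟨by omega, le_rfl⟩, h⟩

lemma decP_concat_le {j : ℕ} (hj : j ≤ u.length) :
    decP (u ++ m :: v) j ↔ decP u j := by
  constructor <;> intro h i hi <;> have hi' := Finset.mem_Icc.mp hi
  · have := h i hi
    rwa [nth_left u v m (by omega), nth_left u v m (by omega)] at this
  · rw [nth_left u v m (by omega), nth_left u v m (by omega)]
    exact h i hi

include hu in
lemma decP_concat_succ :
    decP (u ++ m :: v) (u.length + 1) ↔ decP u u.length := by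
  constructor <;> intro h i hi <;> have hi' := Finset.mem_Icc.mp hi
  · have := h i (by rw [Finset.mem_Icc]; omega)
    rwa [nth_left u v m (by omega), nth_left u v m (by omega)] at this
  · simp only [Nat.add_sub_cancel] at hi'
    rcases eq_or_lt_of_le hi'.2 with hc | hc
    · subst hc
      rw [nth_mid u v m, nth_left u v m le_rfl]
      exact hu _ (nth_mem u hi'.1 le_rfl)
    · rw [nth_left u v m (by omega), nth_left u v m (by omega)]
      exact h i (by rw [Finset.mem_Icc]; omega)

include hv in
lemma not_decP_concat {j : ℕ} (hj1 : u.length + 2 ≤ j)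
    (hj2 : j ≤ u.length + v.length + 1) : ¬ decP (u ++ m :: v) j := by
  intro h
  have hq : 1 ≤ v.length := by omega
  have := h (u.length + 1) (by rw [Finset.mem_Icc]; omega)
  rw [nth_mid u v m, nth_right u v m (by omega),
    show u.length + 1 + 1 - (u.length + 1) = 1 by omega] at this
  exact absurd this (not_lt.mpr (le_of_lt (hv _ (nth_mem v le_rfl hq))))

include hu hv in
lemma ldr_concat :
    ldrl (u ++ m :: v) = if ldrl u = u.length then u.length + 1 else ldrl u := by
  by_cases hdec : decP u u.length
  · rw [if_pos ((ldr_full u).mpr hdec)]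
    have hfil : (Finset.Icc 1 (u ++ m :: v).length).filter (decP (u ++ m :: v)) =
        insert (u.length + 1) ((Finset.Icc 1 u.length).filter (decP u)) := by
      ext j
      simp only [Finset.mem_filter, Finset.mem_Icc, Finset.mem_insert, len_concat]
      constructor
      · rintro ⟨⟨hj1, hj2⟩, hd⟩
        rcases lt_trichotomy j (u.length + 1) with hc | hc | hc
        · right
          exact ⟨⟨hj1, by omega⟩, (decP_concat_le u v m (by omega)).mp hd⟩
        · left; exact hc
        · exact absurd hd (not_decP_concat u v m hv (by omega) (by omega))
      · rintro (rfl | ⟨⟨hj1, hj2⟩, hd⟩)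
        · exact ⟨⟨by omega, by omega⟩, (decP_concat_succ u v m hu).mpr hdec⟩
        · exact ⟨⟨hj1, by omega⟩, (decP_concat_le u v m (by omega)).mpr hd⟩
    unfold ldrl
    rw [hfil, Finset.sup_insert]
    have h2 : ((Finset.Icc 1 u.length).filter (decP u)).sup id ≤ u.length := ldr_le u
    simp only [id]
    omega
  · rw [if_neg (fun h => hdec ((ldr_full u).mp h))]
    have hfil : (Finset.Icc 1 (u ++ m :: v).length).filter (decP (u ++ m :: v)) =
        (Finset.Icc 1 u.length).filter (decP u) := by
      ext j
      simp only [Finset.mem_filter, Finset.mem_Icc, len_concat]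
      constructor
      · rintro ⟨⟨hj1, hj2⟩, hd⟩
        rcases lt_trichotomy j (u.length + 1) with hc | hc | hc
        · exact ⟨⟨hj1, by omega⟩, (decP_concat_le u v m (by omega)).mp hd⟩
        · exact absurd ((decP_concat_succ u v m hu).mp (hc ▸ hd)) hdec
        · exact absurd hd (not_decP_concat u v m hv (by omega) (by omega))
      · rintro ⟨⟨hj1, hj2⟩, hd⟩
        exact ⟨⟨hj1, by omega⟩, (decP_concat_le u v m (by omega)).mpr hd⟩
    unfold ldrl
    rw [hfil]

lemma incS_concat_le {j : ℕ} (hj : j ≤ v.length) :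
    incS (u ++ m :: v) j ↔ incS v j := by
  rw [incS, incS, len_concat]
  constructor <;> intro h i hi <;> have hi' := Finset.mem_Icc.mp hi
  · have h2 := h (u.length + 1 + i) (by rw [Finset.mem_Icc]; omega)
    rwa [nth_right u v m (by omega), nth_right u v m (by omega),
      show u.length + 1 + i - (u.length + 1) = i by omega,
      show u.length + 1 + i + 1 - (u.length + 1) = i + 1 by omega] at h2
  · have h2 := h (i - (u.length + 1)) (by rw [Finset.mem_Icc]; omega)
    rw [nth_right u v m (by omega), nth_right u v m (by omega),
      show i + 1 - (u.length + 1) = i - (u.length + 1) + 1 by omega]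
    exact h2

include hv in
lemma incS_concat_succ :
    incS (u ++ m :: v) (v.length + 1) ↔ incS v v.length := by
  rw [incS, incS, len_concat]
  constructor <;> intro h i hi <;> have hi' := Finset.mem_Icc.mp hi
  · have h2 := h (u.length + 1 + i) (by rw [Finset.mem_Icc]; omega)
    rwa [nth_right u v m (by omega), nth_right u v m (by omega),
      show u.length + 1 + i - (u.length + 1) = i by omega,
      show u.length + 1 + i + 1 - (u.length + 1) = i + 1 by omega] at h2
  · rcases eq_or_lt_of_le hi'.1 with hc | hc
    · have hie : i = u.length + 1 := by omega
      subst hie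
      have hq : 1 ≤ v.length := by omega
      rw [nth_mid u v m, nth_right u v m (by omega),
        show u.length + 1 + 1 - (u.length + 1) = 1 by omega]
      exact hv _ (nth_mem v le_rfl hq)
    · have h2 := h (i - (u.length + 1)) (by rw [Finset.mem_Icc]; omega)
      rw [nth_right u v m (by omega), nth_right u v m (by omega),
        show i + 1 - (u.length + 1) = i - (u.length + 1) + 1 by omega]
      exact h2

include hu in
lemma not_incS_concat {j : ℕ} (hj1 : v.length + 2 ≤ j)
    (hj2 : j ≤ u.length + v.length + 1) : ¬ incS (u ++ m :: v) j := by
  intro h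
  have hp : 1 ≤ u.length := by omega
  have h2 := h u.length (by rw [Finset.mem_Icc, len_concat]; omega)
  rw [nth_left u v m le_rfl, nth_mid u v m] at h2
  exact absurd h2 (not_lt.mpr (le_of_lt (hu _ (nth_mem u hp le_rfl))))

include hu hv in
lemma rar_concat :
    rarl (u ++ m :: v) = if rarl v = v.length then v.length + 1 else rarl v := by
  by_cases hinc : incS v v.length
  · rw [if_pos ((rar_full v).mpr hinc)]
    have hfil : (Finset.Icc 1 (u ++ m :: v).length).filter (incS (u ++ m :: v)) =
        insert (v.length + 1) ((Finset.Icc 1 v.length).filter (incS v)) := by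
      ext j
      simp only [Finset.mem_filter, Finset.mem_Icc, Finset.mem_insert, len_concat]
      constructor
      · rintro ⟨⟨hj1, hj2⟩, hd⟩
        rcases lt_trichotomy j (v.length + 1) with hc | hc | hc
        · right
          exact ⟨⟨hj1, by omega⟩, (incS_concat_le u v m (by omega)).mp hd⟩
        · left; exact hc
        · exact absurd hd (not_incS_concat u v m hu (by omega) (by omega))
      · rintro (rfl | ⟨⟨hj1, hj2⟩, hd⟩)
        · exact ⟨⟨by omega, by omega⟩, (incS_concat_succ u v m hv).mpr hinc⟩
        · exact ⟨⟨hj1, by omega⟩, (incS_concat_le u v m (by omega)).mpr hd⟩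
    unfold rarl
    rw [hfil, Finset.sup_insert]
    have h2 : ((Finset.Icc 1 v.length).filter (incS v)).sup id ≤ v.length := rar_le v
    simp only [id]
    omega
  · rw [if_neg (fun h => hinc ((rar_full v).mp h))]
    have hfil : (Finset.Icc 1 (u ++ m :: v).length).filter (incS (u ++ m :: v)) =
        (Finset.Icc 1 v.length).filter (incS v) := by
      ext j
      simp only [Finset.mem_filter, Finset.mem_Icc, len_concat]
      constructor
      · rintro ⟨⟨hj1, hj2⟩, hd⟩
        rcases lt_trichotomy j (v.length + 1) with hc | hc | hc
        · exact ⟨⟨hj1, by omega⟩, (incS_concat_le u v m (by omega)).mp hd⟩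
        · exact absurd ((incS_concat_succ u v m hv).mp (hc ▸ hd)) hinc
        · exact absurd hd (not_incS_concat u v m hu (by omega) (by omega))
      · rintro ⟨⟨hj1, hj2⟩, hd⟩
        exact ⟨⟨hj1, by omega⟩, (incS_concat_le u v m (by omega)).mpr hd⟩
    unfold rarl
    rw [hfil]


include hu hv in
lemma avl_concat_mp (h : avl (u ++ m :: v)) : avl u ∧ avl v := by
  constructor
  · intro i hi j hj k hk hij hjk hcon
    rw [Finset.mem_Icc] at hi hj hk
    refine h i (by rw [Finset.mem_Icc, len_concat]; omega) j
      (by rw [Finset.mem_Icc, len_concat]; omega) k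
      (by rw [Finset.mem_Icc, len_concat]; omega) hij hjk ?_
    rwa [nth_left u v m (by omega), nth_left u v m (by omega), nth_left u v m (by omega)]
  · intro i hi j hj k hk hij hjk hcon
    rw [Finset.mem_Icc] at hi hj hk
    refine h (u.length + 1 + i) (by rw [Finset.mem_Icc, len_concat]; omega)
      (u.length + 1 + j) (by rw [Finset.mem_Icc, len_concat]; omega)
      (u.length + 1 + k) (by rw [Finset.mem_Icc, len_concat]; omega)
      (by omega) (by omega) ?_
    rw [nth_right u v m (by omega), nth_right u v m (by omega), nth_right u v m (by omega),
      show u.length + 1 + i - (u.length + 1) = i by omega,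
      show u.length + 1 + j - (u.length + 1) = j by omega,
      show u.length + 1 + k - (u.length + 1) = k by omega]
    exact hcon

variable (huv : ∀ x ∈ u, ∀ y ∈ v, x < y)

include hu hv huv in
lemma avl_concat_mpr (hau : avl u) (hav : avl v) : avl (u ++ m :: v) := by
  intro i hi j hj k hk hij hjk hcon
  rw [Finset.mem_Icc, len_concat] at hi hj hk
  obtain ⟨h1, h2⟩ := hcon
  rcases lt_trichotomy k (u.length + 1) with hck | hck | hck
  · -- all indices in u
    rw [nth_left u v m (show k ≤ u.length by omega)] at h1 h2
    rw [nth_left u v m (show i ≤ u.length by omega)] at h1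
    rw [nth_left u v m (show j ≤ u.length by omega)] at h2
    exact hau i (by rw [Finset.mem_Icc]; omega) j (by rw [Finset.mem_Icc]; omega)
      k (by rw [Finset.mem_Icc]; omega) hij hjk ⟨h1, h2⟩
  · -- k = p + 1 : w_k = m
    subst hck
    rw [nth_mid u v m] at h2
    rw [nth_left u v m (show j ≤ u.length by omega)] at h2
    exact absurd h2 (not_lt.mpr (le_of_lt (hu _ (nth_mem u (by omega) (by omega)))))
  · -- k in v
    have hkv : nth (u ++ m :: v) k ∈ v := by
      rw [nth_right u v m (show u.length + 2 ≤ k by omega)]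
      exact nth_mem v (by omega) (by omega)
    rcases lt_trichotomy i (u.length + 1) with hci | hci | hci
    · -- i in u
      rw [nth_left u v m (show i ≤ u.length by omega)] at h1
      have hlt2 := huv _ (nth_mem u (i := i) (by omega) (by omega)) _ hkv
      omega
    · -- i = p+1 : w_i = m
      subst hci
      rw [nth_mid u v m] at h1
      exact absurd h1 (not_lt.mpr (le_of_lt (hv _ hkv)))
    · -- all in v
      rw [nth_right u v m (show u.length + 2 ≤ k by omega)] at h1 h2
      rw [nth_right u v m (show u.length + 2 ≤ i by omega)] at h1
      rw [nth_right u v m (show u.length + 2 ≤ j by omega)] at h2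
      exact hav (i - (u.length + 1)) (by rw [Finset.mem_Icc]; omega)
        (j - (u.length + 1)) (by rw [Finset.mem_Icc]; omega)
        (k - (u.length + 1)) (by rw [Finset.mem_Icc]; omega)
        (by omega) (by omega) ⟨h1, h2⟩

end StatRec

/-! ### separation and intervals -/

lemma nth_of_getElem {w : List ℕ} {i : ℕ} (h : i < w.length) :
    nth w (i + 1) = w[i] := by
  rw [nth_eq, if_neg (by omega), Nat.add_sub_cancel, List.getElem?_eq_getElem h]
  rfl

lemma sep_of_avl {u v : List ℕ} {m : ℕ} (hnd : (u ++ m :: v).Nodup)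
    (h : avl (u ++ m :: v)) (hv : ∀ y ∈ v, m < y) :
    ∀ x ∈ u, ∀ y ∈ v, x < y := by
  intro x hx y hy
  obtain ⟨i0, hi0, hxe⟩ := List.mem_iff_getElem.mp hx
  obtain ⟨j0, hj0, hye⟩ := List.mem_iff_getElem.mp hy
  have hxn : nth u (i0 + 1) = x := hxe ▸ nth_of_getElem hi0
  have hyn : nth v (j0 + 1) = y := hye ▸ nth_of_getElem hj0
  have key := h (i0 + 1) (by rw [Finset.mem_Icc, len_concat]; omega)
    (u.length + 1) (by rw [Finset.mem_Icc, len_concat]; omega)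
    (u.length + 1 + (j0 + 1)) (by rw [Finset.mem_Icc, len_concat]; omega)
    (by omega) (by omega)
  rw [nth_left u v m (show i0 + 1 ≤ u.length by omega), nth_mid u v m,
    nth_right u v m (show u.length + 2 ≤ u.length + 1 + (j0 + 1) by omega),
    show u.length + 1 + (j0 + 1) - (u.length + 1) = j0 + 1 by omega, hxn, hyn] at key
  have hmy : m < y := hv y hy
  have hxy : x ≠ y := by
    have hdisj := (List.nodup_append.mp hnd).2.2
    intro he
    exact hdisj x hx y (List.mem_cons_of_mem m hy) he
  omega

lemma blocks {u v : List ℕ} {m c : ℕ} (hnd : (u ++ m :: v).Nodup)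
    (hfs : (u ++ m :: v).toFinset = Finset.Icc c (c + u.length + v.length))
    (hm_u : ∀ x ∈ u, m < x) (hm_v : ∀ x ∈ v, m < x)
    (hsep : ∀ x ∈ u, ∀ y ∈ v, x < y) :
    m = c ∧ u.toFinset = Finset.Icc (c + 1) (c + u.length) ∧
      v.toFinset = Finset.Icc (c + u.length + 1) (c + u.length + v.length) := by
  have hsplit : (u ++ m :: v).toFinset = u.toFinset ∪ insert m v.toFinset := by
    rw [List.toFinset_append, List.toFinset_cons]
  have hmem_iff : ∀ z : ℕ, (z ∈ u ∨ z = m ∨ z ∈ v) ↔ (c ≤ z ∧ z ≤ c + u.length + v.length) := by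
    intro z
    constructor
    · intro hz
      have : z ∈ (u ++ m :: v).toFinset := by
        rw [hsplit]
        simp only [Finset.mem_union, Finset.mem_insert, List.mem_toFinset]
        tauto
      rw [hfs, Finset.mem_Icc] at this
      exact this
    · intro hz
      have : z ∈ (u ++ m :: v).toFinset := by rw [hfs, Finset.mem_Icc]; exact hz
      rw [hsplit] at this
      simp only [Finset.mem_union, Finset.mem_insert, List.mem_toFinset] at this
      tauto
  have hmc : m = c := by
    have h1 : c ≤ m := ((hmem_iff m).mp (Or.inr (Or.inl rfl))).1
    have h2 := (hmem_iff c).mpr ⟨le_rfl, by omega⟩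
    rcases h2 with hc | hc | hc
    · have := hm_u c hc; omega
    · omega
    · have := hm_v c hc; omega
  subst hmc
  have hcards : u.toFinset.card = u.length := List.toFinset_card_of_nodup (List.nodup_append.mp hnd).1
  have hcardv : v.toFinset.card = v.length :=
    List.toFinset_card_of_nodup (List.nodup_cons.mp (List.nodup_append.mp hnd).2.1).2
  have hUsub : u.toFinset ⊆ Finset.Icc (m + 1) (m + u.length) := by
    intro x hx
    rw [List.mem_toFinset] at hx
    rw [Finset.mem_Icc]
    have hb := (hmem_iff x).mp (Or.inl hx)
    have h1 : m + 1 ≤ x := hm_u x hx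
    refine ⟨h1, ?_⟩
    by_contra hcon
    push_neg at hcon
    have hsub2 : insert x (Finset.Icc (m + 1) (x - 1)) ⊆ u.toFinset := by
      intro z hz
      simp only [Finset.mem_insert, Finset.mem_Icc] at hz
      rw [List.mem_toFinset]
      rcases hz with rfl | ⟨hz1, hz2⟩
      · exact hx
      · have hzb := (hmem_iff z).mpr ⟨by omega, by omega⟩
        rcases hzb with h | h | h
        · exact h
        · omega
        · have := hsep x hx z h; omega
    have hcard2 := Finset.card_le_card hsub2
    rw [Finset.card_insert_of_notMem (by rw [Finset.mem_Icc]; omega), Nat.card_Icc] at hcard2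
    omega
  have hU : u.toFinset = Finset.Icc (m + 1) (m + u.length) := by
    apply Finset.eq_of_subset_of_card_le hUsub
    rw [Nat.card_Icc, hcards]
    omega
  refine ⟨rfl, hU, ?_⟩
  have hVsub : v.toFinset ⊆ Finset.Icc (m + u.length + 1) (m + u.length + v.length) := by
    intro y hy
    rw [List.mem_toFinset] at hy
    rw [Finset.mem_Icc]
    have hb := (hmem_iff y).mp (Or.inr (Or.inr hy))
    refine ⟨?_, hb.2⟩
    by_cases hp : u.length = 0
    · have := hm_v y hy; omega
    · have hmem : m + u.length ∈ u.toFinset := by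
        rw [hU, Finset.mem_Icc]; omega
      rw [List.mem_toFinset] at hmem
      have := hsep _ hmem y hy
      omega
  apply Finset.eq_of_subset_of_card_le hVsub
  rw [Nat.card_Icc, hcardv]
  omega

/-! ### Goodness and phi -/

def GoodL (w : List ℕ) (c : ℕ) : Prop :=
  avl w ∧ w.Nodup ∧ w.toFinset = Finset.Icc c (c + w.length - 1)

lemma min_spec (w : List ℕ) (hw : w ≠ []) :
    (w.min?).getD 0 ∈ w ∧ ∀ x ∈ w, (w.min?).getD 0 ≤ x := by
  obtain ⟨a, ha⟩ : ∃ a, w.min? = some a := by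
    cases w with
    | nil => simp at hw
    | cons x t => exact ⟨_, List.min?_cons⟩
  have h2 := (List.min?_eq_some_iff).mp ha
  rw [ha]
  exact h2

def phi (w : List ℕ) (k : ℕ) : List ℕ :=
  if hw : w = [] then []
  else
    phi (w.drop (w.idxOf ((w.min?).getD 0) + 1)) (k + 1) ++
      k :: phi (w.take (w.idxOf ((w.min?).getD 0)))
        (k + 1 + (w.drop (w.idxOf ((w.min?).getD 0) + 1)).length)
termination_by w.length
decreasing_by
  · have hlt : w.idxOf ((w.min?).getD 0) < w.length :=
      List.idxOf_lt_length_iff.mpr (min_spec w hw).1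
    simp only [List.length_drop]
    omega
  · have hlt : w.idxOf ((w.min?).getD 0) < w.length :=
      List.idxOf_lt_length_iff.mpr (min_spec w hw).1
    simp only [List.length_take]
    omega

@[simp] lemma phi_nil (k : ℕ) : phi [] k = [] := by
  rw [phi]
  simp

lemma phi_concat (u v : List ℕ) (m k : ℕ) (hu : ∀ x ∈ u, m < x) (hv : ∀ x ∈ v, m < x) :
    phi (u ++ m :: v) k = phi v (k + 1) ++ k :: phi u (k + 1 + v.length) := by
  have hne : u ++ m :: v ≠ [] := by simp
  have hminv : ((u ++ m :: v).min?).getD 0 = m := by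
    have h1 : (u ++ m :: v).min? = some m := by
      apply List.min?_eq_some_iff.mpr
      constructor
      · simp
      · intro b hb
        simp only [List.mem_append, List.mem_cons] at hb
        rcases hb with hb | rfl | hb
        · exact le_of_lt (hu b hb)
        · exact le_rfl
        · exact le_of_lt (hv b hb)
    rw [h1]
    rfl
  have hidx : (u ++ m :: v).idxOf m = u.length := by
    rw [List.idxOf_append_of_notMem (fun hmem => lt_irrefl m (hu m hmem))]
    simp
  have hdrop : (u ++ m :: v).drop (u.length + 1) = v := by
    rw [show u ++ m :: v = (u ++ [m]) ++ v by simp]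
    exact List.drop_left' (by simp)
  have htake : (u ++ m :: v).take u.length = u := List.take_left
  rw [phi, dif_neg hne, hminv, hidx, hdrop, htake]

/-! ### nil statistics -/

@[simp] lemma desSet_nil : desSet [] = ∅ := by
  have : Finset.Icc 1 (([] : List ℕ).length - 1) = ∅ := by
    apply Finset.Icc_eq_empty
    simp
  rw [desSet, this, Finset.filter_empty]

@[simp] lemma ascSet_nil : ascSet [] = ∅ := by
  have : Finset.Icc 1 (([] : List ℕ).length - 1) = ∅ := by
    apply Finset.Icc_eq_empty
    simp
  rw [ascSet, this, Finset.filter_empty]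

@[simp] lemma mndl_nil : mndl [] = 0 := by rw [mndl, desSet_nil, M_empty]
@[simp] lemma mnal_nil : mnal [] = 0 := by rw [mnal, ascSet_nil, M_empty]
@[simp] lemma desl_nil : desl [] = 0 := by rw [desl, desSet_nil, Finset.card_empty]
@[simp] lemma ascl_nil : ascl [] = 0 := by rw [ascl, ascSet_nil, Finset.card_empty]
@[simp] lemma m9l_nil : m9l [] = 0 := by rw [m9l, if_pos rfl]
@[simp] lemma m10l_nil : m10l [] = 0 := by rw [m10l, if_pos rfl]

@[simp] lemma ldrl_nil : ldrl [] = 0 := by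
  have : Finset.Icc 1 (([] : List ℕ).length) = ∅ := by
    apply Finset.Icc_eq_empty
    simp
  rw [ldrl, this, Finset.filter_empty, Finset.sup_empty]
  rfl

@[simp] lemma rarl_nil : rarl [] = 0 := by
  have : Finset.Icc 1 (([] : List ℕ).length) = ∅ := by
    apply Finset.Icc_eq_empty
    simp
  rw [rarl, this, Finset.filter_empty, Finset.sup_empty]
  rfl

@[simp] lemma lminl_nil : lminl [] = 0 := by
  have : Finset.Icc 1 (([] : List ℕ).length) = ∅ := by
    apply Finset.Icc_eq_empty
    simp
  rw [lminl, lminSet, this, Finset.filter_empty, Finset.card_empty]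

@[simp] lemma rminl_nil : rminl [] = 0 := by
  have : Finset.Icc 1 (([] : List ℕ).length) = ∅ := by
    apply Finset.Icc_eq_empty
    simp
  rw [rminl, rminSet, this, Finset.filter_empty, Finset.card_empty]

lemma avl_nil : avl [] := by
  intro i hi
  simp only [List.length_nil] at hi
  have : Finset.Icc 1 0 = (∅ : Finset ℕ) := Finset.Icc_eq_empty (by omega)
  rw [this] at hi
  exact absurd hi (Finset.notMem_empty i)

lemma good_nil {k : ℕ} (hk : 1 ≤ k) : GoodL [] k := by
  refine ⟨avl_nil, List.nodup_nil, ?_⟩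
  rw [List.toFinset_nil]
  symm
  apply Finset.Icc_eq_empty
  simp
  omega

/-! ### splitting a good word at its minimum -/

lemma split_good {w : List ℕ} {c : ℕ} (hc : 1 ≤ c) (hw : w ≠ []) (hg : GoodL w c) :
    ∃ u v, w = u ++ c :: v ∧
      (∀ x ∈ u, c < x) ∧ (∀ x ∈ v, c < x) ∧ (∀ x ∈ u, ∀ y ∈ v, x < y) ∧
      GoodL u (c + 1) ∧ GoodL v (c + u.length + 1) := by
  obtain ⟨hav, hnd, hfs⟩ := hg
  have hcw : c ∈ w := by
    rw [← List.mem_toFinset, hfs, Finset.mem_Icc]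
    have : 1 ≤ w.length := List.length_pos_iff.mpr hw
    omega
  obtain ⟨u, v, rfl⟩ := List.append_of_mem hcw
  have hlen : (u ++ c :: v).length = u.length + v.length + 1 := len_concat u v c
  have hndu := (List.nodup_append.mp hnd).1
  have hnd2 := (List.nodup_append.mp hnd).2.1
  have hdisj := (List.nodup_append.mp hnd).2.2
  have hcv : c ∉ v := (List.nodup_cons.mp hnd2).1
  have hndv := (List.nodup_cons.mp hnd2).2
  have hmemw : ∀ z ∈ u ++ c :: v, c ≤ z := by
    intro z hz
    rw [← List.mem_toFinset, hfs, Finset.mem_Icc] at hz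
    exact hz.1
  have hm_u : ∀ x ∈ u, c < x := by
    intro x hx
    have h1 := hmemw x (by simp [hx])
    have h2 : x ≠ c := fun he => hdisj x hx c List.mem_cons_self he
    omega
  have hm_v : ∀ x ∈ v, c < x := by
    intro x hx
    have h1 := hmemw x (by simp [hx])
    have h2 : x ≠ c := fun he => hcv (he ▸ hx)
    omega
  have hsep := sep_of_avl hnd hav hm_v
  have hfs' : (u ++ c :: v).toFinset = Finset.Icc c (c + u.length + v.length) := by
    rw [hfs, hlen]
    congr 1
    omega
  obtain ⟨_, hU, hV⟩ := blocks hnd hfs' hm_u hm_v hsep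
  obtain ⟨hau, hav2⟩ := avl_concat_mp u v c hm_u hm_v hav
  refine ⟨u, v, rfl, hm_u, hm_v, hsep, ⟨hau, hndu, ?_⟩, ⟨hav2, hndv, ?_⟩⟩
  · rw [hU]
    congr 1
    omega
  · rw [hV]
    congr 1
    omega

/-! ### the main list-level theorem -/

theorem phi_main (N : ℕ) : ∀ (w : List ℕ) (c k : ℕ), w.length ≤ N → 1 ≤ c → 1 ≤ k →
    GoodL w c →
    GoodL (phi w k) k ∧ (phi w k).length = w.length ∧ phi (phi w k) c = w ∧
      mndl (phi w k) = mnal w ∧ mnal (phi w k) = mndl w ∧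
      desl (phi w k) = ascl w ∧ ascl (phi w k) = desl w ∧
      ldrl (phi w k) = rarl w ∧ rarl (phi w k) = ldrl w ∧
      lminl (phi w k) = rminl w ∧ rminl (phi w k) = lminl w ∧
      m9l (phi w k) = m10l w ∧ m10l (phi w k) = m9l w := by
  induction N with
  | zero =>
    intro w c k hlen hc hk hg
    have hwe : w = [] := List.length_eq_zero_iff.mp (by omega)
    subst hwe
    rw [phi_nil]
    exact ⟨good_nil hk, rfl, by rw [phi_nil], by simp, by simp, by simp, by simp, by simp,
      by simp, by simp, by simp, by simp, by simp⟩
  | succ N IH =>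
    intro w c k hlen hc hk hg
    by_cases hwe : w = []
    · subst hwe
      rw [phi_nil]
      exact ⟨good_nil hk, rfl, by rw [phi_nil], by simp, by simp, by simp, by simp, by simp,
        by simp, by simp, by simp, by simp, by simp⟩
    · obtain ⟨u, v, rfl, hm_u, hm_v, hsep, hgu, hgv⟩ := split_good hc hwe hg
      have hlen2 : (u ++ c :: v).length = u.length + v.length + 1 := len_concat u v c
      have hul : u.length ≤ N := by omega
      have hvl : v.length ≤ N := by omega
      obtain ⟨hgU, hlU, hivU, hmndU, hmnaU, hdesU, hascU, hldrU, hrarU, hlmiU, hrmiU,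
        hm9U, hm10U⟩ := IH v (c + u.length + 1) (k + 1) hvl (by omega) (by omega) hgv
      obtain ⟨hgV, hlV, hivV, hmndV, hmnaV, hdesV, hascV, hldrV, hrarV, hlmiV, hrmiV,
        hm9V, hm10V⟩ := IH u (c + 1) (k + 1 + v.length) hul (by omega) (by omega) hgu
      have hphiw : phi (u ++ c :: v) k = phi v (k + 1) ++ k :: phi u (k + 1 + v.length) :=
        phi_concat u v c k hm_u hm_v
      have hu' : ∀ x ∈ phi v (k + 1), k < x := by
        intro x hx
        have hx' : x ∈ (phi v (k + 1)).toFinset := List.mem_toFinset.mpr hx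
        rw [hgU.2.2, Finset.mem_Icc] at hx'
        omega
      have hv' : ∀ x ∈ phi u (k + 1 + v.length), k < x := by
        intro x hx
        have hx' : x ∈ (phi u (k + 1 + v.length)).toFinset := List.mem_toFinset.mpr hx
        rw [hgV.2.2, Finset.mem_Icc] at hx'
        omega
      have hsep' : ∀ x ∈ phi v (k + 1), ∀ y ∈ phi u (k + 1 + v.length), x < y := by
        intro x hx y hy
        have hx' : x ∈ (phi v (k + 1)).toFinset := List.mem_toFinset.mpr hx
        have hy' : y ∈ (phi u (k + 1 + v.length)).toFinset := List.mem_toFinset.mpr hy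
        rw [hgU.2.2, Finset.mem_Icc] at hx'
        rw [hgV.2.2, Finset.mem_Icc] at hy'
        rw [hlU] at hx'
        omega
      have hUe : phi v (k + 1) = [] ↔ v = [] := by
        rw [← List.length_eq_zero_iff, ← List.length_eq_zero_iff, hlU]
      have hVe : phi u (k + 1 + v.length) = [] ↔ u = [] := by
        rw [← List.length_eq_zero_iff, ← List.length_eq_zero_iff, hlV]
      rw [hphiw]
      refine ⟨⟨?_, ?_, ?_⟩, ?_, ?_, ?_, ?_, ?_, ?_, ?_, ?_, ?_, ?_, ?_, ?_⟩
      · -- avl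
        exact avl_concat_mpr _ _ k hu' hv' hsep' hgU.1 hgV.1
      · -- nodup
        rw [List.nodup_append]
        refine ⟨hgU.2.1, List.nodup_cons.mpr ⟨fun hkm => lt_irrefl k (hv' k hkm), hgV.2.1⟩, ?_⟩
        intro a ha b ha2 hab
        subst hab
        rcases List.mem_cons.mp ha2 with rfl | hb
        · exact lt_irrefl a (hu' a ha)
        · exact lt_irrefl a (hsep' a ha a hb)
      · -- toFinset
        rw [List.toFinset_append, List.toFinset_cons]
        ext z
        simp only [Finset.mem_union, Finset.mem_insert, hgU.2.2, hgV.2.2, Finset.mem_Icc,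
          len_concat, hlU, hlV]
        omega
      · -- length
        rw [len_concat, len_concat, hlU, hlV]
        omega
      · -- involution
        rw [phi_concat _ _ k c hu' hv', hlV,
          show c + 1 + u.length = c + u.length + 1 by omega, hivV, hivU]
      · -- mnd
        rw [mnd_concat _ _ k hu' hv', mna_concat u v c hm_u hm_v, hmndV]
        by_cases hv0 : v = []
        · rw [if_pos (hUe.mpr hv0), if_pos hv0]
          omega
        · rw [if_neg (fun h => hv0 (hUe.mp h)), if_neg hv0, hm9U]
          omega
      · -- mna
        rw [mna_concat _ _ k hu' hv', mnd_concat u v c hm_u hm_v, hmnaU]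
        by_cases hu0 : u = []
        · rw [if_pos (hVe.mpr hu0), if_pos hu0]
          omega
        · rw [if_neg (fun h => hu0 (hVe.mp h)), if_neg hu0, hm10V]
          omega
      · -- des
        rw [des_concat _ _ k hu' hv', asc_concat u v c hm_u hm_v, hdesU, hdesV]
        by_cases hv0 : v = []
        · rw [if_pos (hUe.mpr hv0), if_pos hv0]
          omega
        · rw [if_neg (fun h => hv0 (hUe.mp h)), if_neg hv0]
          omega
      · -- asc
        rw [asc_concat _ _ k hu' hv', des_concat u v c hm_u hm_v, hascU, hascV]
        by_cases hu0 : u = []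
        · rw [if_pos (hVe.mpr hu0), if_pos hu0]
          omega
        · rw [if_neg (fun h => hu0 (hVe.mp h)), if_neg hu0]
          omega
      · -- ldr
        rw [ldr_concat _ _ k hu' hv', rar_concat u v c hm_u hm_v, hldrU, hlU]
      · -- rar
        rw [rar_concat _ _ k hu' hv', ldr_concat u v c hm_u hm_v, hrarV, hlV]
      · -- lmin
        rw [lmin_concat _ _ k hu' hv', rmin_concat u v c hm_u hm_v, hlmiU]
      · -- rmin
        rw [rmin_concat _ _ k hu' hv', lmin_concat u v c hm_u hm_v, hrmiV]
      · -- m9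
        rw [m9_concat _ _ k hu' hv', m10_concat u v c hm_u hm_v]
        by_cases hu0 : u = []
        · rw [if_pos (hVe.mpr hu0), if_pos hu0, hmndU]
        · rw [if_neg (fun h => hu0 (hVe.mp h)), if_neg hu0, hm9V]
          by_cases hv0 : v = []
          · rw [if_pos (hUe.mpr hv0), if_pos hv0]
            omega
          · rw [if_neg (fun h => hv0 (hUe.mp h)), if_neg hv0, hm9U]
            omega
      · -- m10
        rw [m10_concat _ _ k hu' hv', m9_concat u v c hm_u hm_v]
        by_cases hv0 : v = []
        · rw [if_pos (hUe.mpr hv0), if_pos hv0, hmnaV]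
        · rw [if_neg (fun h => hv0 (hUe.mp h)), if_neg hv0, hm10U]
          by_cases hu0 : u = []
          · rw [if_pos (hVe.mpr hu0), if_pos hu0]
            omega
          · rw [if_neg (fun h => hu0 (hVe.mp h)), if_neg hu0, hm10V]
            omega

/-! ### bridge to permutations -/

def toW (n : ℕ) (π : Equiv.Perm (Fin n)) : List ℕ := List.ofFn (fun i => (π i : ℕ) + 1)

@[simp] lemma length_toW (n : ℕ) (π : Equiv.Perm (Fin n)) : (toW n π).length = n := by
  simp [toW]

lemma nth_toW (n : ℕ) (π : Equiv.Perm (Fin n)) : nth (toW n π) = PermWord.wordOf n π := by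
  funext i
  rw [nth, PermWord.wordOf]
  by_cases h : 1 ≤ i ∧ i ≤ n
  · rw [dif_pos (by rw [length_toW]; exact h), dif_pos h]
    simp only [toW, List.getElem_ofFn]
  · rw [dif_neg (by rw [length_toW]; exact h), dif_neg h]

lemma DES_toW (n : ℕ) (π : Equiv.Perm (Fin n)) : PermWord.DES n π = desSet (toW n π) := by
  rw [PermWord.DES, desSet, length_toW, nth_toW]

lemma ASC_toW (n : ℕ) (π : Equiv.Perm (Fin n)) : PermWord.ASC n π = ascSet (toW n π) := by
  rw [PermWord.ASC, ascSet, length_toW, nth_toW]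

lemma mnd_toW (n : ℕ) (π : Equiv.Perm (Fin n)) : PermWord.mnd n π = mndl (toW n π) := by
  rw [PermWord.mnd, mndl, M, DES_toW]

lemma mna_toW (n : ℕ) (π : Equiv.Perm (Fin n)) : PermWord.mna n π = mnal (toW n π) := by
  rw [PermWord.mna, mnal, M, ASC_toW]

lemma des_toW (n : ℕ) (π : Equiv.Perm (Fin n)) : PermWord.des n π = desl (toW n π) := by
  rw [PermWord.des, desl, DES_toW]

lemma asc_toW (n : ℕ) (π : Equiv.Perm (Fin n)) : PermWord.asc n π = ascl (toW n π) := by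
  rw [PermWord.asc, ascl, ASC_toW]

lemma lmin_toW (n : ℕ) (π : Equiv.Perm (Fin n)) : PermWord.lmin n π = lminl (toW n π) := by
  have hf : Finset.filter (PermWord.IsLRMin n π) (Finset.Icc 1 n) =
      Finset.filter (IsLRMinL (toW n π)) (Finset.Icc 1 n) :=
    Finset.filter_congr (fun j _ => by unfold PermWord.IsLRMin IsLRMinL; rw [nth_toW])
  rw [PermWord.lmin, lminl, lminSet, length_toW, hf]

lemma rmin_toW (n : ℕ) (π : Equiv.Perm (Fin n)) : PermWord.rmin n π = rminl (toW n π) := by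
  have hf : Finset.filter (PermWord.IsRLMin n π) (Finset.Icc 1 n) =
      Finset.filter (IsRLMinL (toW n π)) (Finset.Icc 1 n) :=
    Finset.filter_congr (fun j _ => by
      unfold PermWord.IsRLMin IsRLMinL
      rw [nth_toW, length_toW])
  rw [PermWord.rmin, rminl, rminSet, length_toW, hf]

lemma ldr_toW (n : ℕ) (π : Equiv.Perm (Fin n)) : PermWord.ldr n π = ldrl (toW n π) := by
  have hf : Finset.filter (PermWord.DecreasingPrefix n π) (Finset.Icc 1 n) =
      Finset.filter (decP (toW n π)) (Finset.Icc 1 n) :=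
    Finset.filter_congr (fun j _ => by
      unfold PermWord.DecreasingPrefix decP
      rw [nth_toW])
  rw [PermWord.ldr, ldrl, length_toW, hf]

lemma rar_toW (n : ℕ) (π : Equiv.Perm (Fin n)) : PermWord.rar n π = rarl (toW n π) := by
  have hf : Finset.filter (PermWord.IncreasingSuffix n π) (Finset.Icc 1 n) =
      Finset.filter (incS (toW n π)) (Finset.Icc 1 n) :=
    Finset.filter_congr (fun j _ => by
      unfold PermWord.IncreasingSuffix incS
      rw [nth_toW, length_toW])
  rw [PermWord.rar, rarl, length_toW, hf]

lemma avoids_toW (n : ℕ) (π : Equiv.Perm (Fin n)) :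
    PermWord.Avoids312 n π ↔ avl (toW n π) := by
  rw [PermWord.Avoids312, avl, length_toW, nth_toW]

lemma nodup_toW (n : ℕ) (π : Equiv.Perm (Fin n)) : (toW n π).Nodup := by
  rw [toW]
  apply List.nodup_ofFn.mpr
  intro a b hab
  dsimp at hab
  apply π.injective
  apply Fin.ext
  omega

lemma toFinset_toW (n : ℕ) (π : Equiv.Perm (Fin n)) :
    (toW n π).toFinset = Finset.Icc 1 n := by
  apply Finset.eq_of_subset_of_card_le
  · intro x hx
    rw [List.mem_toFinset, toW, List.mem_ofFn] at hx
    obtain ⟨i, rfl⟩ := hx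
    rw [Finset.mem_Icc]
    have := (π i).isLt
    show 1 ≤ (π i : ℕ) + 1 ∧ (π i : ℕ) + 1 ≤ n
    omega
  · rw [Nat.card_Icc, List.toFinset_card_of_nodup (nodup_toW n π), length_toW]
    omega

lemma good_toW (n : ℕ) (π : Equiv.Perm (Fin n)) (h : PermWord.Avoids312 n π) :
    GoodL (toW n π) 1 := by
  refine ⟨(avoids_toW n π).mp h, nodup_toW n π, ?_⟩
  rw [toFinset_toW, length_toW]
  congr 1
  omega

lemma toW_inj (n : ℕ) (π σ : Equiv.Perm (Fin n)) (h : toW n π = toW n σ) : π = σ := by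
  apply Equiv.ext
  intro i
  have e1 : (toW n π)[(i : ℕ)]? = (toW n σ)[(i : ℕ)]? := by rw [h]
  rw [List.getElem?_eq_getElem (by simpa using i.isLt),
    List.getElem?_eq_getElem (by simpa using i.isLt)] at e1
  simp only [toW, List.getElem_ofFn] at e1
  have e2 : (π i : ℕ) + 1 = (σ i : ℕ) + 1 := by
    have := Option.some_inj.mp e1
    simpa using this
  apply Fin.ext
  omega

noncomputable def permOf (n : ℕ) (L : List ℕ) (hlen : L.length = n) (hnd : L.Nodup)
    (hval : ∀ x ∈ L, 1 ≤ x ∧ x ≤ n) : Equiv.Perm (Fin n) :=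
  Equiv.ofBijective
    (fun i => ⟨L[(i : ℕ)]'(by omega) - 1, by
      have h1 := hval _ (List.getElem_mem (l := L) (n := (i : ℕ)) (by omega))
      omega⟩)
    (Finite.injective_iff_bijective.mp (by
      intro a b hab
      have h1 := hval _ (List.getElem_mem (l := L) (n := (a : ℕ)) (by omega))
      have h2 := hval _ (List.getElem_mem (l := L) (n := (b : ℕ)) (by omega))
      have h3 : L[(a : ℕ)]'(by omega) - 1 = L[(b : ℕ)]'(by omega) - 1 := congrArg Fin.val hab
      have h4 : L[(a : ℕ)]'(by omega) = L[(b : ℕ)]'(by omega) := by omega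
      have h5 : (a : ℕ) = (b : ℕ) := (hnd.getElem_inj_iff).mp h4
      exact Fin.ext h5))

lemma toW_permOf (n : ℕ) (L : List ℕ) (hlen : L.length = n) (hnd : L.Nodup)
    (hval : ∀ x ∈ L, 1 ≤ x ∧ x ≤ n) : toW n (permOf n L hlen hnd hval) = L := by
  apply List.ext_getElem (by rw [length_toW, hlen])
  intro i h1 h2
  simp only [toW, List.getElem_ofFn]
  show ((permOf n L hlen hnd hval) ⟨i, by rw [length_toW] at h1; exact h1⟩ : ℕ) + 1 = L[i]
  simp only [permOf, Equiv.ofBijective_apply]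
  have h3 := hval _ (List.getElem_mem (l := L) (n := i) h2)
  omega

lemma phi_perm_spec (n : ℕ) (π : Equiv.Perm (Fin n)) (h : PermWord.Avoids312 n π) :
    (phi (toW n π) 1).length = n ∧ (phi (toW n π) 1).Nodup ∧
      (∀ x ∈ phi (toW n π) 1, 1 ≤ x ∧ x ≤ n) := by
  obtain ⟨hg, hlen, -⟩ :=
    phi_main (toW n π).length (toW n π) 1 1 le_rfl le_rfl le_rfl (good_toW n π h)
  have hlen' : (phi (toW n π) 1).length = n := by rw [hlen, length_toW]
  refine ⟨hlen', hg.2.1, ?_⟩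
  intro x hx
  have hx' : x ∈ (phi (toW n π) 1).toFinset := List.mem_toFinset.mpr hx
  rw [hg.2.2, Finset.mem_Icc, hlen'] at hx'
  omega

noncomputable def Phi (n : ℕ) (π : Equiv.Perm (Fin n)) : Equiv.Perm (Fin n) :=
  if h : PermWord.Avoids312 n π then
    permOf n (phi (toW n π) 1) (phi_perm_spec n π h).1 (phi_perm_spec n π h).2.1
      (phi_perm_spec n π h).2.2
  else π

lemma toW_Phi (n : ℕ) (π : Equiv.Perm (Fin n)) (h : PermWord.Avoids312 n π) :
    toW n (Phi n π) = phi (toW n π) 1 := by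
  rw [Phi, dif_pos h, toW_permOf]

lemma Phi_spec (n : ℕ) (π : Equiv.Perm (Fin n)) (h : PermWord.Avoids312 n π) :
    PermWord.Avoids312 n (Phi n π) ∧ Phi n (Phi n π) = π ∧
      PermWord.mnd n (Phi n π) = PermWord.mna n π ∧
      PermWord.mna n (Phi n π) = PermWord.mnd n π ∧
      PermWord.des n (Phi n π) = PermWord.asc n π ∧
      PermWord.asc n (Phi n π) = PermWord.des n π ∧
      PermWord.ldr n (Phi n π) = PermWord.rar n π ∧
      PermWord.rar n (Phi n π) = PermWord.ldr n π ∧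
      PermWord.lmin n (Phi n π) = PermWord.rmin n π ∧
      PermWord.rmin n (Phi n π) = PermWord.lmin n π := by
  obtain ⟨hg, hlen, hinv, e1, e2, e3, e4, e5, e6, e7, e8, -, -⟩ :=
    phi_main (toW n π).length (toW n π) 1 1 le_rfl le_rfl le_rfl (good_toW n π h)
  have htw := toW_Phi n π h
  have hav2 : PermWord.Avoids312 n (Phi n π) := by
    rw [avoids_toW, htw]
    exact hg.1
  refine ⟨hav2, ?_, ?_, ?_, ?_, ?_, ?_, ?_, ?_, ?_⟩
  · apply toW_inj
    rw [toW_Phi n _ hav2, htw, hinv]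
  · rw [mnd_toW, htw, e1, ← mna_toW]
  · rw [mna_toW, htw, e2, ← mnd_toW]
  · rw [des_toW, htw, e3, ← asc_toW]
  · rw [asc_toW, htw, e4, ← des_toW]
  · rw [ldr_toW, htw, e5, ← rar_toW]
  · rw [rar_toW, htw, e6, ← ldr_toW]
  · rw [lmin_toW, htw, e7, ← rmin_toW]
  · rw [rmin_toW, htw, e8, ← lmin_toW]

end KZ

open scoped Classical in
/-- **Theorem (Kitaev–Zhang symmetry on `312`-avoiding permutations).**  For `n ≥ 1`,
the 8-tuples `(mnd, mna, des, asc, ldr, rar, lmin, rmin)` and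
`(mna, mnd, asc, des, rar, ldr, rmin, lmin)` are equidistributed over `S_n(312)`. -/
theorem kitaev_zhang_equidistribution
    (n : ℕ) (hn : 1 ≤ n) (a1 a2 a3 a4 a5 a6 a7 a8 : ℕ) :
    ((Finset.univ : Finset (Equiv.Perm (Fin n))).filter (fun π =>
        PermWord.Avoids312 n π ∧ PermWord.mnd n π = a1 ∧ PermWord.mna n π = a2 ∧
        PermWord.des n π = a3 ∧ PermWord.asc n π = a4 ∧ PermWord.ldr n π = a5 ∧
        PermWord.rar n π = a6 ∧ PermWord.lmin n π = a7 ∧ PermWord.rmin n π = a8)).card =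
    ((Finset.univ : Finset (Equiv.Perm (Fin n))).filter (fun π =>
        PermWord.Avoids312 n π ∧ PermWord.mna n π = a1 ∧ PermWord.mnd n π = a2 ∧
        PermWord.asc n π = a3 ∧ PermWord.des n π = a4 ∧ PermWord.rar n π = a5 ∧
        PermWord.ldr n π = a6 ∧ PermWord.rmin n π = a7 ∧ PermWord.lmin n π = a8)).card := by
  apply Finset.card_bij' (fun π _ => KZ.Phi n π) (fun π _ => KZ.Phi n π)
  · intro a ha
    rw [Finset.mem_filter] at ha ⊢
    obtain ⟨-, hav, h1, h2, h3, h4, h5, h6, h7, h8⟩ := ha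
    obtain ⟨hav', -, e1, e2, e3, e4, e5, e6, e7, e8⟩ := KZ.Phi_spec n a hav
    exact ⟨Finset.mem_univ _, hav', by rw [e2, h1], by rw [e1, h2], by rw [e4, h3],
      by rw [e3, h4], by rw [e6, h5], by rw [e5, h6], by rw [e8, h7], by rw [e7, h8]⟩
  · intro a ha
    rw [Finset.mem_filter] at ha ⊢
    obtain ⟨-, hav, h1, h2, h3, h4, h5, h6, h7, h8⟩ := ha
    obtain ⟨hav', -, e1, e2, e3, e4, e5, e6, e7, e8⟩ := KZ.Phi_spec n a hav
    exact ⟨Finset.mem_univ _, hav', by rw [e1, h1], by rw [e2, h2], by rw [e3, h3],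
      by rw [e4, h4], by rw [e5, h5], by rw [e6, h6], by rw [e7, h7], by rw [e8, h8]⟩
  · intro a ha
    rw [Finset.mem_filter] at ha
    exact (KZ.Phi_spec n a ha.2.1).2.1
  · intro a ha
    rw [Finset.mem_filter] at ha
    exact (KZ.Phi_spec n a ha.2.1).2.1
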